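/- Let k ≥ 0 be an integer, a₁, a₂ ∈ ℝ, b₁, b₂ > 0, and let f : ℝ → ℝ satisfy a₁ − b₁ η^{2k+1} ≤ f(η) ≤ a₂ − b₂ η^{2k+1} for all η ∈ ℝ. Then there exist constants a ≥ 0, b > 0 and c ≥ 0, depending only on a₁, a₂, b₁, b₂ and k, such that ( f(η + ζ) − f(ζ) ) · sgn(η) ≤ a − b |η|^{2k+1} + c |ζ|^{2k+1} for all η, ζ ∈ ℝ. -/

import Mathlib

/-- Auxiliary: for `β > 0`, `η > 0` and odd exponent `n = 2k+1`,
`β/2^n * η^n ≤ β*(η+ζ)^n + 2β*|ζ|^n`. -/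
lemma stmt_19_aux (k : ℕ) (β : ℝ) (hβ : 0 < β) (η ζ : ℝ) (hη : 0 < η) :
    β / 2 ^ (2 * k + 1) * η ^ (2 * k + 1)
      ≤ β * (η + ζ) ^ (2 * k + 1) + 2 * β * |ζ| ^ (2 * k + 1) := by
  set n := 2 * k + 1 with hn
  have hodd : Odd n := ⟨k, by omega⟩
  have h2 : (0:ℝ) < 2 ^ n := by positivity
  rcases le_or_gt 0 (η + ζ) with hpos | hneg
  · have h1 : η ^ n ≤ ((η + ζ) + |ζ|) ^ n := by
      apply pow_le_pow_left₀ hη.le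
      have := neg_abs_le ζ
      linarith
    have h2' : ((η + ζ) + |ζ|) ^ n ≤ 2 ^ (n - 1) * ((η + ζ) ^ n + |ζ| ^ n) :=
      add_pow_le hpos (abs_nonneg ζ) n
    have hpow : (2:ℝ) ^ (n - 1) ≤ 2 ^ n := by
      apply pow_le_pow_right₀ one_le_two; omega
    have h4 : η ^ n ≤ 2 ^ n * ((η + ζ) ^ n + |ζ| ^ n) := by
      refine (h1.trans h2').trans (mul_le_mul_of_nonneg_right hpow ?_)
      have : (0:ℝ) ≤ (η + ζ) ^ n := pow_nonneg hpos n
      have : (0:ℝ) ≤ |ζ| ^ n := pow_nonneg (abs_nonneg ζ) n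
      linarith
    have h5 : β / 2 ^ n * η ^ n ≤ β * ((η + ζ) ^ n + |ζ| ^ n) := by
      rw [div_mul_eq_mul_div, div_le_iff₀ h2]
      nlinarith [mul_le_mul_of_nonneg_left h4 hβ.le]
    have hz : (0:ℝ) ≤ β * |ζ| ^ n := by positivity
    nlinarith [h5]
  · have hζ : ζ < 0 := by linarith
    have habs : |ζ| = -ζ := abs_of_neg hζ
    have h1 : η ^ n ≤ |ζ| ^ n := by
      apply pow_le_pow_left₀ hη.le; rw [habs]; linarith
    have h2' : (η + ζ) ^ n = -(-(η + ζ)) ^ n := by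
      rw [hodd.neg_pow]; ring
    have h3 : (-(η + ζ)) ^ n ≤ |ζ| ^ n := by
      apply pow_le_pow_left₀ (by linarith); rw [habs]; linarith
    have hb' : β / 2 ^ n ≤ β := by
      rw [div_le_iff₀ h2]
      have h1n : (1:ℝ) ≤ 2 ^ n := by
        calc (1:ℝ) = 1 ^ n := (one_pow n).symm
          _ ≤ 2 ^ n := pow_le_pow_left₀ one_pos.le one_le_two n
      nlinarith [h1n]
    have h5 : β / 2 ^ n * η ^ n ≤ β * |ζ| ^ n := by
      have hbp : (0:ℝ) < β / 2 ^ n := by positivity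
      calc β / 2 ^ n * η ^ n ≤ β / 2 ^ n * |ζ| ^ n :=
            mul_le_mul_of_nonneg_left h1 hbp.le
        _ ≤ β * |ζ| ^ n := mul_le_mul_of_nonneg_right hb' (by positivity)
    have h6 : -(β * |ζ| ^ n) ≤ β * (η + ζ) ^ n := by
      rw [h2']
      nlinarith [h3]
    nlinarith [h5, h6]

/-- dissipativity of increments for a polynomially bounded reaction term. -/
theorem stmt_19 (k : ℕ) (a₁ a₂ b₁ b₂ : ℝ) (hb₁ : 0 < b₁) (hb₂ : 0 < b₂) :
    ∃ a : ℝ, 0 ≤ a ∧ ∃ b : ℝ, 0 < b ∧ ∃ c : ℝ, 0 ≤ c ∧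
      ∀ f : ℝ → ℝ,
        (∀ η : ℝ, a₁ - b₁ * η ^ (2 * k + 1) ≤ f η ∧ f η ≤ a₂ - b₂ * η ^ (2 * k + 1)) →
        ∀ η ζ : ℝ,
          (f (η + ζ) - f ζ) * Real.sign η ≤ a - b * |η| ^ (2 * k + 1) + c * |ζ| ^ (2 * k + 1) := by
  have hodd : Odd (2 * k + 1) := ⟨k, by omega⟩
  have h2 : (0:ℝ) < 2 ^ (2 * k + 1) := by positivity
  refine ⟨|a₁| + |a₂|, by positivity, min b₁ b₂ / 2 ^ (2 * k + 1), by positivity,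
    2 * (b₁ + b₂), by positivity, ?_⟩
  intro f hf η ζ
  have haux : a₂ - a₁ ≤ |a₁| + |a₂| := by
    have := le_abs_self a₂; have := neg_abs_le a₁; linarith
  have hζabs : ζ ^ (2 * k + 1) ≤ |ζ| ^ (2 * k + 1) := by
    calc ζ ^ (2 * k + 1) ≤ |ζ ^ (2 * k + 1)| := le_abs_self _
      _ = |ζ| ^ (2 * k + 1) := abs_pow ζ _
  have hζabs' : -(ζ ^ (2 * k + 1)) ≤ |ζ| ^ (2 * k + 1) := by
    calc -(ζ ^ (2 * k + 1)) ≤ |ζ ^ (2 * k + 1)| := neg_le_abs _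
      _ = |ζ| ^ (2 * k + 1) := abs_pow ζ _
  have hηnn : (0:ℝ) ≤ |η| ^ (2 * k + 1) := pow_nonneg (abs_nonneg η) _
  rcases lt_trichotomy η 0 with hη | hη | hη
  · rw [Real.sign_of_neg hη]
    have h1 := (hf (η + ζ)).1
    have h2' := (hf ζ).2
    have key := stmt_19_aux k b₁ hb₁ (-η) (-ζ) (by linarith)
    rw [show (-η) + (-ζ) = -(η + ζ) by ring, hodd.neg_pow (η + ζ), hodd.neg_pow η,
      abs_neg] at key
    have hηabs : |η| ^ (2 * k + 1) = -(η ^ (2 * k + 1)) := by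
      rw [abs_of_neg hη, hodd.neg_pow]
    have hBle : min b₁ b₂ / 2 ^ (2 * k + 1) * |η| ^ (2 * k + 1)
        ≤ b₁ / 2 ^ (2 * k + 1) * |η| ^ (2 * k + 1) := by
      gcongr
      exact min_le_left _ _
    rw [hηabs] at hBle
    rw [hηabs]
    nlinarith [key, mul_le_mul_of_nonneg_left hζabs' hb₂.le,
      mul_nonneg hb₂.le (pow_nonneg (abs_nonneg ζ) (2 * k + 1))]
  · simp only [hη, Real.sign_zero, mul_zero, abs_zero]
    have : (0:ℝ) ^ (2 * k + 1) = 0 := zero_pow (by omega)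
    rw [this]
    have : (0:ℝ) ≤ |ζ| ^ (2 * k + 1) := pow_nonneg (abs_nonneg ζ) _
    nlinarith [abs_nonneg a₁, abs_nonneg a₂]
  · rw [Real.sign_of_pos hη]
    have h1 := (hf (η + ζ)).2
    have h2' := (hf ζ).1
    have key := stmt_19_aux k b₂ hb₂ η ζ hη
    have hηabs : |η| ^ (2 * k + 1) = η ^ (2 * k + 1) := by
      rw [abs_of_pos hη]
    have hBle : min b₁ b₂ / 2 ^ (2 * k + 1) * |η| ^ (2 * k + 1)
        ≤ b₂ / 2 ^ (2 * k + 1) * |η| ^ (2 * k + 1) := by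
      gcongr
      exact min_le_right _ _
    rw [hηabs] at hBle
    rw [hηabs]
    nlinarith [key, mul_le_mul_of_nonneg_left hζabs hb₁.le,
      mul_nonneg hb₁.le (pow_nonneg (abs_nonneg ζ) (2 * k + 1))]
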